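/- Let η, η' > 0, let d, d' ≥ 1 be natural numbers, let Q ⊂ ℝ^d and Q' ⊂ ℝ^{d'} be nonempty bounded sets, and let Ψ : ℝ^d → ℝ^d and Ψ' : ℝ^{d'} → ℝ^{d'} be linear bijections with |Ψ(Q)| ≥ η diam(Ψ(Q))^d and |Ψ'(Q')| ≥ η' diam(Ψ'(Q'))^{d'}, where diam(Ψ(Q)) > 0 and diam(Ψ'(Q')) > 0. Define Ψ̃(x, y) = (r Ψ(x)/diam(Ψ(Q)), Ψ'(y)/diam(Ψ'(Q'))) with r² = d/d'. Then |Ψ̃(Q × Q')| ≥ η̃ · diam(Ψ̃(Q × Q'))^{d+d'}, where η̃ = η η' · d'^{d'/2} d^{d/2} / (d+d')^{(d+d')/2}. -/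

import Mathlib

open MeasureTheory Pointwise

lemma append_mp (d d' : ℕ) :
    MeasurePreserving (fun p : (Fin d → ℝ) × (Fin d' → ℝ) => Fin.append p.1 p.2)
      volume volume := by
  have h : (fun p : (Fin d → ℝ) × (Fin d' → ℝ) => Fin.append p.1 p.2) =
      ⇑((MeasurableEquiv.sumPiEquivProdPi (fun _ : Fin d ⊕ Fin d' => ℝ)).symm.trans
        (MeasurableEquiv.piCongrLeft (fun _ : Fin (d + d') => ℝ) finSumFinEquiv)) := by
    funext p
    funext i
    induction i using Fin.addCases with
    | left j =>
      rw [Fin.append_left, ← finSumFinEquiv_apply_left]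
      simp only [MeasurableEquiv.trans_apply, MeasurableEquiv.coe_piCongrLeft,
        MeasurableEquiv.coe_sumPiEquivProdPi_symm]
      exact (Equiv.piCongrLeft_sumInl (fun _ => ℝ) finSumFinEquiv p.1 p.2 j).symm ▸ rfl
    | right j =>
      rw [Fin.append_right, ← finSumFinEquiv_apply_right]
      simp only [MeasurableEquiv.trans_apply, MeasurableEquiv.coe_piCongrLeft,
        MeasurableEquiv.coe_sumPiEquivProdPi_symm]
      exact (Equiv.piCongrLeft_sumInr (fun _ => ℝ) finSumFinEquiv p.1 p.2 j).symm ▸ rfl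
  rw [h, MeasurableEquiv.coe_trans]
  exact (volume_measurePreserving_piCongrLeft _ _).comp
    (volume_measurePreserving_sumPiEquivProdPi_symm _)

lemma mp_image {α β : Type*} [MeasurableSpace α] [MeasurableSpace β]
    {μ : Measure α} {ν : Measure β} (e : α ≃ᵐ β)
    (h : MeasurePreserving e μ ν) (s : Set α) : ν (⇑e '' s) = μ s := by
  rw [MeasurableEquiv.image_eq_preimage_symm, ← MeasurableEquiv.map_apply e.symm,
    (h.symm e).map_eq]

lemma vol_append_image (d d' : ℕ) (A : Set (Fin d → ℝ)) (B : Set (Fin d' → ℝ)) :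
    volume ((fun p : (Fin d → ℝ) × (Fin d' → ℝ) => Fin.append p.1 p.2) '' (A ×ˢ B))
      = volume A * volume B := by
  have h : (fun p : (Fin d → ℝ) × (Fin d' → ℝ) => Fin.append p.1 p.2) =
      ⇑((MeasurableEquiv.sumPiEquivProdPi (fun _ : Fin d ⊕ Fin d' => ℝ)).symm.trans
        (MeasurableEquiv.piCongrLeft (fun _ : Fin (d + d') => ℝ) finSumFinEquiv)) := by
    funext p
    funext i
    induction i using Fin.addCases with
    | left j =>
      rw [Fin.append_left, ← finSumFinEquiv_apply_left]
      simp only [MeasurableEquiv.trans_apply, MeasurableEquiv.coe_piCongrLeft,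
        MeasurableEquiv.coe_sumPiEquivProdPi_symm]
      exact (Equiv.piCongrLeft_sumInl (fun _ => ℝ) finSumFinEquiv p.1 p.2 j).symm ▸ rfl
    | right j =>
      rw [Fin.append_right, ← finSumFinEquiv_apply_right]
      simp only [MeasurableEquiv.trans_apply, MeasurableEquiv.coe_piCongrLeft,
        MeasurableEquiv.coe_sumPiEquivProdPi_symm]
      exact (Equiv.piCongrLeft_sumInr (fun _ => ℝ) finSumFinEquiv p.1 p.2 j).symm ▸ rfl
  have hmp := append_mp d d'
  rw [h] at hmp ⊢
  rw [mp_image _ hmp, Measure.volume_eq_prod, Measure.prod_prod]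

lemma dist_append_sq {d d' : ℕ} (a a' : EuclideanSpace ℝ (Fin d))
    (b b' : EuclideanSpace ℝ (Fin d'))
    (x y : EuclideanSpace ℝ (Fin (d + d')))
    (hxa : ∀ i, x (Fin.castAdd d' i) = a i) (hxb : ∀ i, x (Fin.natAdd d i) = b i)
    (hya : ∀ i, y (Fin.castAdd d' i) = a' i) (hyb : ∀ i, y (Fin.natAdd d i) = b' i) :
    dist x y ^ 2 = dist a a' ^ 2 + dist b b' ^ 2 := by
  rw [EuclideanSpace.dist_eq, EuclideanSpace.dist_eq, EuclideanSpace.dist_eq,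
    Real.sq_sqrt (by positivity), Real.sq_sqrt (by positivity), Real.sq_sqrt (by positivity),
    Fin.sum_univ_add]
  congr 1 <;> refine Finset.sum_congr rfl fun i _ => ?_
  · rw [hxa, hya]
  · rw [hxb, hyb]

/-- Geometric core of combining coverings under Cartesian products: if `|Ψ(Q)| ≥ η diam(Ψ(Q))^d`
and `|Ψ'(Q')| ≥ η' diam(Ψ'(Q'))^{d'}`, then the map
`Ψ̃(x,y) = (r Ψ(x)/diam(Ψ(Q)), Ψ'(y)/diam(Ψ'(Q')))` with `r = √(d/d')` satisfies
`|Ψ̃(Q × Q')| ≥ η̃ diam(Ψ̃(Q × Q'))^{d+d'}` with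
`η̃ = η η' d'^{d'/2} d^{d/2} / (d+d')^{(d+d')/2}`. Here the product `ℝ^d × ℝ^{d'}` is
realised as `ℝ^{d+d'}` via `Fin.append`. -/
theorem stmt_11 {d d' : ℕ} (hd : 1 ≤ d) (hd' : 1 ≤ d')
    (η η' : ℝ) (hη : 0 < η) (hη' : 0 < η')
    (Q : Set (EuclideanSpace ℝ (Fin d))) (Q' : Set (EuclideanSpace ℝ (Fin d')))
    (hQne : Q.Nonempty) (hQ'ne : Q'.Nonempty)
    (hQbd : Bornology.IsBounded Q) (hQ'bd : Bornology.IsBounded Q')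
    (Ψ : EuclideanSpace ℝ (Fin d) ≃ₗ[ℝ] EuclideanSpace ℝ (Fin d))
    (Ψ' : EuclideanSpace ℝ (Fin d') ≃ₗ[ℝ] EuclideanSpace ℝ (Fin d'))
    (hdiam : 0 < Metric.diam (Ψ '' Q)) (hdiam' : 0 < Metric.diam (Ψ' '' Q'))
    (hvol : η * Metric.diam (Ψ '' Q) ^ d ≤ (volume (Ψ '' Q)).toReal)
    (hvol' : η' * Metric.diam (Ψ' '' Q') ^ d' ≤ (volume (Ψ' '' Q')).toReal) :
    let r : ℝ := Real.sqrt ((d : ℝ) / (d' : ℝ))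
    let S : Set (EuclideanSpace ℝ (Fin (d + d'))) :=
      Set.image2 (fun x y => (WithLp.toLp 2 (Fin.append
        (((r / Metric.diam (Ψ '' Q)) • Ψ x : EuclideanSpace ℝ (Fin d)) : Fin d → ℝ)
        ((((Metric.diam (Ψ' '' Q'))⁻¹ • Ψ' y : EuclideanSpace ℝ (Fin d')) : Fin d' → ℝ))) :
          EuclideanSpace ℝ (Fin (d + d')))) Q Q'
    η * η' * Real.rpow (d' : ℝ) ((d' : ℝ) / 2) * Real.rpow (d : ℝ) ((d : ℝ) / 2) /
        Real.rpow ((d : ℝ) + (d' : ℝ)) (((d : ℝ) + (d' : ℝ)) / 2) *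
        Metric.diam S ^ (d + d') ≤ (volume S).toReal := by
  intro r S
  set D := Metric.diam (Ψ '' Q) with hD
  set D' := Metric.diam (Ψ' '' Q') with hD'
  have hdpos : (0 : ℝ) < d := by exact_mod_cast hd
  have hd'pos : (0 : ℝ) < d' := by exact_mod_cast hd'
  have hrpos : 0 < r := Real.sqrt_pos.mpr (div_pos hdpos hd'pos)
  have hr2 : r ^ 2 = (d : ℝ) / d' := Real.sq_sqrt (le_of_lt (div_pos hdpos hd'pos))
  -- boundedness of images
  have hΨbd : Bornology.IsBounded (Ψ '' Q) := by
    have : Bornology.IsBounded ((LinearMap.toContinuousLinearMap (Ψ : EuclideanSpace ℝ (Fin d) →ₗ[ℝ] EuclideanSpace ℝ (Fin d))) '' Q) :=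
      ((LinearMap.toContinuousLinearMap _).lipschitz).isBounded_image hQbd
    simpa using this
  have hΨ'bd : Bornology.IsBounded (Ψ' '' Q') := by
    have : Bornology.IsBounded ((LinearMap.toContinuousLinearMap (Ψ' : EuclideanSpace ℝ (Fin d') →ₗ[ℝ] EuclideanSpace ℝ (Fin d'))) '' Q') :=
      ((LinearMap.toContinuousLinearMap _).lipschitz).isBounded_image hQ'bd
    simpa using this
  -- diameter bound
  have hdiamS : Metric.diam S ≤ Real.sqrt ((d : ℝ) / d' + 1) := by
    apply Metric.diam_le_of_forall_dist_le (Real.sqrt_nonneg _)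
    rintro p hp q hq
    obtain ⟨x, hx, y, hy, rfl⟩ := hp
    obtain ⟨x', hx', y', hy', rfl⟩ := hq
    have hsq := dist_append_sq ((r / D) • Ψ x) ((r / D) • Ψ x')
      ((D')⁻¹ • Ψ' y) ((D')⁻¹ • Ψ' y')
      (WithLp.toLp 2 (Fin.append ((r / D) • Ψ x).ofLp ((D')⁻¹ • Ψ' y).ofLp))
      (WithLp.toLp 2 (Fin.append ((r / D) • Ψ x').ofLp ((D')⁻¹ • Ψ' y').ofLp))
      (fun i => Fin.append_left _ _ i) (fun i => Fin.append_right _ _ i)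
      (fun i => Fin.append_left _ _ i) (fun i => Fin.append_right _ _ i)
    have h1 : dist ((r / D) • Ψ x) ((r / D) • Ψ x') ^ 2 ≤ r ^ 2 := by
      rw [dist_smul₀]
      have hle : dist (Ψ x) (Ψ x') ≤ D :=
        Metric.dist_le_diam_of_mem hΨbd (Set.mem_image_of_mem _ hx) (Set.mem_image_of_mem _ hx')
      have : ‖r / D‖ * dist (Ψ x) (Ψ x') ≤ (r / D) * D := by
        rw [Real.norm_eq_abs, abs_of_pos (div_pos hrpos hdiam)]
        exact mul_le_mul_of_nonneg_left hle (le_of_lt (div_pos hrpos hdiam))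
      calc (‖r / D‖ * dist (Ψ x) (Ψ x')) ^ 2 ≤ ((r / D) * D) ^ 2 := by
            apply pow_le_pow_left₀ (by positivity) this
        _ = r ^ 2 := by rw [div_mul_cancel₀ _ (ne_of_gt hdiam)]
    have h2 : dist ((D')⁻¹ • Ψ' y) ((D')⁻¹ • Ψ' y') ^ 2 ≤ 1 := by
      rw [dist_smul₀]
      have hle : dist (Ψ' y) (Ψ' y') ≤ D' :=
        Metric.dist_le_diam_of_mem hΨ'bd (Set.mem_image_of_mem _ hy) (Set.mem_image_of_mem _ hy')
      have : ‖(D')⁻¹‖ * dist (Ψ' y) (Ψ' y') ≤ (D')⁻¹ * D' := by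
        rw [Real.norm_eq_abs, abs_of_pos (inv_pos.mpr hdiam')]
        exact mul_le_mul_of_nonneg_left hle (le_of_lt (inv_pos.mpr hdiam'))
      calc (‖(D')⁻¹‖ * dist (Ψ' y) (Ψ' y')) ^ 2 ≤ ((D')⁻¹ * D') ^ 2 := by
            apply pow_le_pow_left₀ (by positivity) this
        _ = 1 := by rw [inv_mul_cancel₀ (ne_of_gt hdiam')]; norm_num
    rw [Real.le_sqrt dist_nonneg, hsq, ← hr2]
    exact add_le_add h1 h2
    all_goals positivity
  -- volume identity
  set A : Set (EuclideanSpace ℝ (Fin d)) := (r / D) • (Ψ '' Q) with hA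
  set B : Set (EuclideanSpace ℝ (Fin d')) := (D')⁻¹ • (Ψ' '' Q') with hB
  have hSvol : volume S = volume A * volume B := by
    have h1 : volume S = volume
        (⇑((MeasurableEquiv.toLp 2 (Fin (d + d') → ℝ)).symm) '' S) :=
      (mp_image _ (EuclideanSpace.volume_preserving_symm_measurableEquiv_toLp _) S).symm
    have h2 : ⇑((MeasurableEquiv.toLp 2 (Fin (d + d') → ℝ)).symm) '' S =
        (fun p : (Fin d → ℝ) × (Fin d' → ℝ) => Fin.append p.1 p.2) ''
          ((⇑((MeasurableEquiv.toLp 2 (Fin d → ℝ)).symm) '' A) ×ˢ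
           (⇑((MeasurableEquiv.toLp 2 (Fin d' → ℝ)).symm) '' B)) := by
      ext z
      simp only [Set.mem_image, Set.mem_image2, Set.mem_prod, Set.mem_smul_set, hA, hB,
        Prod.exists]
      constructor
      · rintro ⟨w, ⟨x, hx, y, hy, rfl⟩, rfl⟩
        exact ⟨_, _, ⟨⟨_, ⟨Ψ x, Set.mem_image_of_mem _ hx, rfl⟩, rfl⟩,
          ⟨_, ⟨Ψ' y, Set.mem_image_of_mem _ hy, rfl⟩, rfl⟩⟩, rfl⟩
      · rintro ⟨p1, p2, ⟨⟨a, ⟨u, ⟨x, hx, rfl⟩, rfl⟩, rfl⟩, ⟨b, ⟨v, ⟨y, hy, rfl⟩, rfl⟩, rfl⟩⟩, rfl⟩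
        exact ⟨_, ⟨x, hx, y, hy, rfl⟩, rfl⟩
    rw [h1, h2, vol_append_image,
      mp_image _ (EuclideanSpace.volume_preserving_symm_measurableEquiv_toLp _) A,
      mp_image _ (EuclideanSpace.volume_preserving_symm_measurableEquiv_toLp _) B]
  have hfin : volume (Ψ '' Q) ≠ ⊤ := hΨbd.measure_lt_top.ne
  have hfin' : volume (Ψ' '' Q') ≠ ⊤ := hΨ'bd.measure_lt_top.ne
  have hvolA : volume A = ENNReal.ofReal ((r / D) ^ d) * volume (Ψ '' Q) := by
    rw [hA, Measure.addHaar_smul, finrank_euclideanSpace_fin,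
      abs_of_pos (by positivity)]
  have hvolB : volume B = ENNReal.ofReal ((D')⁻¹ ^ d') * volume (Ψ' '' Q') := by
    rw [hB, Measure.addHaar_smul, finrank_euclideanSpace_fin,
      abs_of_pos (by positivity)]
  have htoReal : (volume S).toReal =
      ((r / D) ^ d * (volume (Ψ '' Q)).toReal) *
        ((D')⁻¹ ^ d' * (volume (Ψ' '' Q')).toReal) := by
    rw [hSvol, hvolA, hvolB, ENNReal.toReal_mul, ENNReal.toReal_mul, ENNReal.toReal_mul,
      ENNReal.toReal_ofReal (by positivity), ENNReal.toReal_ofReal (by positivity)]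
  -- arithmetic: the constant times the diameter bound equals η η' r^d
  set N : ℝ := (d : ℝ)
  set N' : ℝ := (d' : ℝ)
  have hkey : η * η' * Real.rpow N' (N' / 2) * Real.rpow N (N / 2) /
      Real.rpow (N + N') ((N + N') / 2) * Real.sqrt (N / N' + 1) ^ (d + d')
      = η * η' * r ^ d := by
    simp only [Real.rpow_eq_pow]
    have e1 : Real.sqrt (N / N' + 1) ^ (d + d') = ((N + N') / N') ^ ((N + N') / 2) := by
      rw [show N / N' + 1 = (N + N') / N' by field_simp]
      rw [← Real.rpow_natCast (Real.sqrt _) (d + d'), Real.sqrt_eq_rpow,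
        ← Real.rpow_mul (by positivity)]
      congr 1
      push_cast
      ring
    have e2 : r ^ d = (N / N') ^ (N / 2) := by
      have hrdef : r = Real.sqrt (N / N') := rfl
      rw [hrdef, ← Real.rpow_natCast _ d, Real.sqrt_eq_rpow, ← Real.rpow_mul (by positivity)]
      congr 1
      ring
    rw [e1, e2, Real.div_rpow (by positivity) (le_of_lt hd'pos),
      Real.div_rpow (le_of_lt hdpos) (le_of_lt hd'pos),
      show (N + N') / 2 = N / 2 + N' / 2 by ring, Real.rpow_add hd'pos,
      Real.rpow_add (by positivity)]
    have h1 : (0:ℝ) < N ^ (N / 2) := Real.rpow_pos_of_pos hdpos _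
    have h2 : (0:ℝ) < N' ^ (N' / 2) := Real.rpow_pos_of_pos hd'pos _
    have h3 : (0:ℝ) < N' ^ (N / 2) := Real.rpow_pos_of_pos hd'pos _
    have h4 : (0:ℝ) < (N + N') ^ (N / 2) := Real.rpow_pos_of_pos (by positivity) _
    have h5 : (0:ℝ) < (N + N') ^ (N' / 2) := Real.rpow_pos_of_pos (by positivity) _
    field_simp
  -- lower bound on the volume
  have hvollb : η * η' * r ^ d ≤ (volume S).toReal := by
    rw [htoReal]
    have l1 : η * r ^ d ≤ (r / D) ^ d * (volume (Ψ '' Q)).toReal := by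
      calc η * r ^ d = (r / D) ^ d * (η * D ^ d) := by
            rw [div_pow, mul_comm η (D ^ d), ← mul_assoc, div_mul_cancel₀ _ (pow_ne_zero _ (ne_of_gt hdiam))]
            ring
        _ ≤ (r / D) ^ d * (volume (Ψ '' Q)).toReal :=
            mul_le_mul_of_nonneg_left hvol (by positivity)
    have l2 : η' ≤ (D')⁻¹ ^ d' * (volume (Ψ' '' Q')).toReal := by
      calc η' = (D')⁻¹ ^ d' * (η' * D' ^ d') := by
            rw [inv_pow, mul_left_comm, inv_mul_cancel₀ (pow_ne_zero _ (ne_of_gt hdiam')), mul_one]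
        _ ≤ (D')⁻¹ ^ d' * (volume (Ψ' '' Q')).toReal :=
            mul_le_mul_of_nonneg_left hvol' (by positivity)
    calc η * η' * r ^ d = (η * r ^ d) * η' := by ring
      _ ≤ ((r / D) ^ d * (volume (Ψ '' Q)).toReal) *
            ((D')⁻¹ ^ d' * (volume (Ψ' '' Q')).toReal) :=
          mul_le_mul l1 l2 (le_of_lt hη') (by positivity)
  -- final chain
  have hC : 0 ≤ η * η' * Real.rpow N' (N' / 2) * Real.rpow N (N / 2) /
      Real.rpow (N + N') ((N + N') / 2) := by
    simp only [Real.rpow_eq_pow]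
    have := Real.rpow_pos_of_pos hdpos (N / 2)
    have := Real.rpow_pos_of_pos hd'pos (N' / 2)
    have : (0:ℝ) < (N + N') ^ ((N + N') / 2) := Real.rpow_pos_of_pos (by positivity) _
    positivity
  calc η * η' * Real.rpow N' (N' / 2) * Real.rpow N (N / 2) /
        Real.rpow (N + N') ((N + N') / 2) * Metric.diam S ^ (d + d')
      ≤ η * η' * Real.rpow N' (N' / 2) * Real.rpow N (N / 2) /
        Real.rpow (N + N') ((N + N') / 2) * Real.sqrt (N / N' + 1) ^ (d + d') :=
        mul_le_mul_of_nonneg_left (pow_le_pow_left₀ Metric.diam_nonneg hdiamS _) hC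
    _ = η * η' * r ^ d := hkey
    _ ≤ (volume S).toReal := hvollb
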